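/- If a graph G admits a (1,1,2,2)-packing coloring, then the subdivision S(G) of G admits a (1,2,3,4,5)-packing coloring; in particular, the packing chromatic number of S(G) is at most 5. -/

import Mathlib

open SimpleGraph

/-- A graph is claw-free if it has no induced subgraph isomorphic to `K_{1,3}`. -/
def IsClawFree {V : Type*} (G : SimpleGraph V) : Prop :=
  ¬ ∃ v a b c : V, a ≠ b ∧ a ≠ c ∧ b ≠ c ∧
    G.Adj v a ∧ G.Adj v b ∧ G.Adj v c ∧ ¬ G.Adj a b ∧ ¬ G.Adj a c ∧ ¬ G.Adj b c

/-- A `(1,1,2,2)`-packing coloring of `G`: a partition of the vertex set (given by a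
function to `Fin 4`) into two independent sets (colors `0`, `1`) and two `2`-packings
(colors `2`, `3`), i.e. sets of vertices pairwise at distance greater than `2`. -/
def IsColoring1122 {V : Type*} (G : SimpleGraph V) (f : V → Fin 4) : Prop :=
  (∀ u v : V, f u = 0 → f v = 0 → ¬ G.Adj u v) ∧
  (∀ u v : V, f u = 1 → f v = 1 → ¬ G.Adj u v) ∧
  (∀ u v : V, u ≠ v → f u = 2 → f v = 2 → 2 < G.edist u v) ∧
  (∀ u v : V, u ≠ v → f u = 3 → f v = 3 → 2 < G.edist u v)

/-- The subdivision `S(G)` of `G`: every edge is replaced by a path of length `2`, with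
one new vertex inserted per edge. Vertices are `V ⊕ G.edgeSet`; an original vertex is
adjacent to an edge-vertex exactly when it is an endpoint of that edge. -/
def subdivision {V : Type*} (G : SimpleGraph V) : SimpleGraph (V ⊕ G.edgeSet) :=
  SimpleGraph.fromRel (fun a b => ∃ (v : V) (e : G.edgeSet),
    a = Sum.inl v ∧ b = Sum.inr e ∧ v ∈ (e : Sym2 V))

section Aux
variable {V : Type*} {G : SimpleGraph V}

lemma subdiv_adj_cases {a b : V ⊕ G.edgeSet} (h : (subdivision G).Adj a b) :
    ∃ (v : V) (e : G.edgeSet), v ∈ (e : Sym2 V) ∧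
      ((a = Sum.inl v ∧ b = Sum.inr e) ∨ (a = Sum.inr e ∧ b = Sum.inl v)) := by
  rw [subdivision, fromRel_adj] at h
  rcases h with ⟨hne, h | h⟩ <;> rcases h with ⟨v, e, h1, h2, h3⟩
  · exact ⟨v, e, h3, Or.inl ⟨h1, h2⟩⟩
  · exact ⟨v, e, h3, Or.inr ⟨h2, h1⟩⟩

lemma adj_of_mem_edge (e : G.edgeSet) {u w : V} (hu : u ∈ (e : Sym2 V))
    (hw : w ∈ (e : Sym2 V)) (hne : u ≠ w) : G.Adj u w := by
  have he : (e : Sym2 V) = s(u, w) := (Sym2.mem_and_mem_iff hne).mp ⟨hu, hw⟩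
  have h2 := e.2
  rw [he] at h2
  exact h2

lemma walk_aux : ∀ {a b : V ⊕ G.edgeSet} (p : (subdivision G).Walk a b) (v : V),
    b = Sum.inl v →
    (∀ u, a = Sum.inl u → ∃ q : G.Walk u v, 2 * q.length ≤ p.length) ∧
    (∀ (e : G.edgeSet), a = Sum.inr e → ∀ u, u ∈ (e : Sym2 V) →
      ∃ q : G.Walk u v, 2 * q.length ≤ p.length + 1) := by
  intro a b p
  induction p with
  | nil =>
    rintro v rfl
    constructor
    · intro u hu
      obtain rfl : v = u := Sum.inl.inj hu
      exact ⟨Walk.nil, by simp⟩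
    · intro e he
      exact absurd he (by simp)
  | cons hadj p ih₀ =>
    rintro v rfl
    have ih := ih₀ v rfl
    obtain ⟨w, e, hwe, hcase⟩ := subdiv_adj_cases hadj
    constructor
    · rintro u rfl
      rcases hcase with ⟨h1, h2⟩ | ⟨h1, h2⟩
      · obtain rfl : u = w := Sum.inl.inj h1
        subst h2
        obtain ⟨q, hq⟩ := ih.2 e rfl u hwe
        exact ⟨q, by simpa using hq⟩
      · exact absurd h1 (by simp)
    · rintro e' rfl u hu
      rcases hcase with ⟨h1, h2⟩ | ⟨h1, h2⟩
      · exact absurd h1 (by simp)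
      · obtain rfl : e' = e := Sum.inr.inj h1
        subst h2
        by_cases huw : u = w
        · subst huw
          obtain ⟨q, hq⟩ := ih.1 u rfl
          refine ⟨q, ?_⟩
          simp only [Walk.length_cons]
          omega
        · obtain ⟨q, hq⟩ := ih.1 w rfl
          refine ⟨Walk.cons (adj_of_mem_edge _ hu hwe huw) q, ?_⟩
          simp only [Walk.length_cons]
          omega

lemma edist_subdiv_le {u v : V} :
    2 * G.edist u v ≤ (subdivision G).edist (Sum.inl u) (Sum.inl v) := by
  by_cases hr : (subdivision G).Reachable (Sum.inl u) (Sum.inl v)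
  · obtain ⟨p, hp⟩ := hr.exists_walk_length_eq_edist
    obtain ⟨q, hq⟩ := (walk_aux p v rfl).1 u rfl
    calc 2 * G.edist u v ≤ 2 * (q.length : ℕ∞) := mul_le_mul_right (edist_le q) 2
      _ ≤ (p.length : ℕ∞) := by exact_mod_cast hq
      _ = _ := hp
  · rw [edist_eq_top_of_not_reachable hr]; exact le_top

lemma two_le_edist' {W : Type*} {H : SimpleGraph W} {u v : W} (hne : u ≠ v)
    (hna : ¬ H.Adj u v) : 2 ≤ H.edist u v := by
  rcases eq_or_ne (H.edist u v) ⊤ with h | h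
  · simp [h]
  · obtain ⟨p, hp⟩ := exists_walk_of_edist_ne_top h
    rw [← hp]
    cases p with
    | nil => exact absurd rfl hne
    | cons hadj q =>
      cases q with
      | nil => exact absurd hadj hna
      | cons h2 q2 =>
        simp only [Walk.length_cons]
        exact_mod_cast by omega


lemma fin4_cases (c : Fin 4) : c = 0 ∨ c = 1 ∨ c = 2 ∨ c = 3 := by
  fin_cases c <;> simp

end Aux

/-- A `(1,2,3,4,5)`-packing coloring of a graph `G`: vertices of color `i ∈ {1,…,5}`
(represented by `Fin 5`, index `i-1`) are pairwise at distance greater than `i`. -/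
def IsColoring12345 {W : Type*} (G : SimpleGraph W) (f : W → Fin 5) : Prop :=
  ∀ u v : W, u ≠ v → f u = f v → ((f u : ℕ) : ℕ∞) + 1 < G.edist u v

/-- If a graph admits a `(1,1,2,2)`-packing coloring, then its subdivision admits a
`(1,2,3,4,5)`-packing coloring; in particular its subdivision has packing chromatic
number at most `5`. -/
theorem subdivision_12345_of_1122 {V : Type*} (G : SimpleGraph V)
    (h : ∃ f : V → Fin 4, IsColoring1122 G f) :
    ∃ g : V ⊕ G.edgeSet → Fin 5, IsColoring12345 (subdivision G) g := by
  obtain ⟨f, hf0, hf1, hf2, hf3⟩ := h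
  refine ⟨Sum.elim (fun v => (f v).succ) (fun _ => 0), ?_⟩
  rintro (u | e) (v | e') hne heq
  · have hne' : u ≠ v := fun h' => hne (by rw [h'])
    have hfe : f u = f v := Fin.succ_injective _ (by simpa using heq)
    have key : 2 * G.edist u v ≤ (subdivision G).edist (Sum.inl u) (Sum.inl v) :=
      edist_subdiv_le
    simp only [Sum.elim_inl]
    rcases fin4_cases (f u) with hc | hc | hc | hc
    · have h2 : 2 ≤ G.edist u v := two_le_edist' hne' (hf0 u v hc (hfe ▸ hc))
      have hS : (4 : ℕ∞) ≤ (subdivision G).edist (Sum.inl u) (Sum.inl v) :=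
        le_trans (by calc (4:ℕ∞) = 2 * 2 := by norm_num
                      _ ≤ 2 * G.edist u v := mul_le_mul_right h2 2) key
      rw [hc]
      exact lt_of_lt_of_le (by decide) hS
    · have h2 : 2 ≤ G.edist u v := two_le_edist' hne' (hf1 u v hc (hfe ▸ hc))
      have hS : (4 : ℕ∞) ≤ (subdivision G).edist (Sum.inl u) (Sum.inl v) :=
        le_trans (by calc (4:ℕ∞) = 2 * 2 := by norm_num
                      _ ≤ 2 * G.edist u v := mul_le_mul_right h2 2) key
      rw [hc]
      exact lt_of_lt_of_le (by decide) hS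
    · have h2 : (3:ℕ∞) ≤ G.edist u v :=
        (ENat.add_one_le_iff (by norm_num : (2:ℕ∞) ≠ ⊤)).mpr (hf2 u v hne' hc (hfe ▸ hc))
      have hS : (6 : ℕ∞) ≤ (subdivision G).edist (Sum.inl u) (Sum.inl v) :=
        le_trans (by calc (6:ℕ∞) = 2 * 3 := by norm_num
                      _ ≤ 2 * G.edist u v := mul_le_mul_right h2 2) key
      rw [hc]
      exact lt_of_lt_of_le (by decide) hS
    · have h2 : (3:ℕ∞) ≤ G.edist u v :=
        (ENat.add_one_le_iff (by norm_num : (2:ℕ∞) ≠ ⊤)).mpr (hf3 u v hne' hc (hfe ▸ hc))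
      have hS : (6 : ℕ∞) ≤ (subdivision G).edist (Sum.inl u) (Sum.inl v) :=
        le_trans (by calc (6:ℕ∞) = 2 * 3 := by norm_num
                      _ ≤ 2 * G.edist u v := mul_le_mul_right h2 2) key
      rw [hc]
      exact lt_of_lt_of_le (by decide) hS
  · exact absurd (by simpa using heq) (Fin.succ_ne_zero (f u))
  · exact absurd (by simpa using heq.symm) (Fin.succ_ne_zero (f v))
  · have hna : ¬ (subdivision G).Adj (Sum.inr e) (Sum.inr e') := by
      intro hadj
      obtain ⟨w, e'', -, hcase⟩ := subdiv_adj_cases hadj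
      rcases hcase with ⟨h1, -⟩ | ⟨-, h2⟩ <;> simp_all
    have h2 : 2 ≤ (subdivision G).edist (Sum.inr e) (Sum.inr e') := two_le_edist' hne hna
    simp only [Sum.elim_inr]
    exact lt_of_lt_of_le (by norm_num) h2
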